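/- Let a₁, b₁, c₁, d₁, a₂, b₂, c₂, d₂ be integers with c₁ ≠ 0. Set D₁ = a₁*b₂ - a₂*b₁, D₂ = b₁*c₂ - b₂*c₁, D₃ = a₁*c₂ - a₂*c₁, D = d₁*c₂ - d₂*c₁, and assume D₂ and D₃ are not both zero. Let D₂₃ = gcd(D₂, D₃) and δ = gcd(c₁*D₁/D₂₃, c₁). If (x₁, y₁) and (x₂, y₂) are two pairs of integers each satisfying D₃*x + D₂*y = D, then δ divides (d₁ - a₁*x₁ - b₁*y₁) - (d₁ - a₁*x₂ - b₁*y₂); hence δ divides d₁ - a₁*x₁ - b₁*y₁ if and only if δ divides d₁ - a₁*x₂ - b₁*y₂. -/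

import Mathlib

lemma kernel_lemma (p q u v : ℤ) (hco : IsCoprime p q) (h : q * u + p * v = 0) :
    ∃ t, u = p * t ∧ v = -(q * t) := by
  rcases eq_or_ne p 0 with rfl | hp
  · have hqu : IsUnit q := isCoprime_zero_left.mp hco
    have hq : q ≠ 0 := hqu.ne_zero
    have hu : u = 0 := by
      have : q * u = 0 := by linarith
      exact (mul_eq_zero.mp this).resolve_left hq
    have hq2 : q * q = 1 := by
      rcases Int.isUnit_iff.mp hqu with h1 | h1 <;> simp [h1]
    refine ⟨-q * v, by simp [hu], ?_⟩
    have h3 : -(q * (-q * v)) = (q * q) * v := by ring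
    rw [h3, hq2, one_mul]
  · have hdvd : p ∣ u := by
      refine hco.dvd_of_dvd_mul_left ⟨-v, by linarith⟩
    obtain ⟨t, rfl⟩ := hdvd
    refine ⟨t, rfl, ?_⟩
    have h0 : p * (q * t + v) = 0 := by ring_nf; linarith
    have := (mul_eq_zero.mp h0).resolve_left hp
    linarith

theorem condition2_well_defined (a₁ b₁ c₁ d₁ a₂ b₂ c₂ d₂ : ℤ) (hc₁ : c₁ ≠ 0)
    (D₁ D₂ D₃ D : ℤ)
    (hD₁ : D₁ = a₁ * b₂ - a₂ * b₁) (hD₂ : D₂ = b₁ * c₂ - b₂ * c₁)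
    (hD₃ : D₃ = a₁ * c₂ - a₂ * c₁) (hD : D = d₁ * c₂ - d₂ * c₁)
    (hnz : ¬ (D₂ = 0 ∧ D₃ = 0))
    (D₂₃ δ : ℤ) (hD₂₃ : D₂₃ = (Int.gcd D₂ D₃ : ℤ))
    (hδ : δ = (Int.gcd (c₁ * D₁ / D₂₃) c₁ : ℤ))
    (x₁ y₁ x₂ y₂ : ℤ)
    (h₁ : D₃ * x₁ + D₂ * y₁ = D) (h₂ : D₃ * x₂ + D₂ * y₂ = D) :
    δ ∣ ((d₁ - a₁ * x₁ - b₁ * y₁) - (d₁ - a₁ * x₂ - b₁ * y₂)) ∧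
      (δ ∣ (d₁ - a₁ * x₁ - b₁ * y₁) ↔ δ ∣ (d₁ - a₁ * x₂ - b₁ * y₂)) := by
  have hgnz : Int.gcd D₂ D₃ ≠ 0 := by
    simp only [ne_eq, Int.gcd_eq_zero_iff]; exact hnz
  have hdnz : D₂₃ ≠ 0 := by
    rw [hD₂₃]; exact_mod_cast hgnz
  obtain ⟨p, hp⟩ : D₂₃ ∣ D₂ := hD₂₃ ▸ Int.gcd_dvd_left D₂ D₃
  obtain ⟨q, hq⟩ : D₂₃ ∣ D₃ := hD₂₃ ▸ Int.gcd_dvd_right D₂ D₃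
  have hco : IsCoprime p q := by
    rw [Int.isCoprime_iff_gcd_eq_one]
    have hp' : p = D₂ / D₂₃ := by
      rw [hp, Int.mul_ediv_cancel_left _ hdnz]
    have hq' : q = D₃ / D₂₃ := by
      rw [hq, Int.mul_ediv_cancel_left _ hdnz]
    rw [hp', hq', hD₂₃]
    exact Int.gcd_div_gcd_div_gcd (Nat.pos_of_ne_zero hgnz)
  have hker : q * (x₁ - x₂) + p * (y₁ - y₂) = 0 := by
    have h0 : D₂₃ * (q * (x₁ - x₂) + p * (y₁ - y₂)) = 0 := by
      linear_combination h₁ - h₂ + (x₂ - x₁) * hq + (y₂ - y₁) * hp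
    exact (mul_eq_zero.mp h0).resolve_left hdnz
  obtain ⟨t, ht1, ht2⟩ := kernel_lemma p q (x₁ - x₂) (y₁ - y₂) hco hker
  have hcd : c₁ * D₁ = D₂₃ * (b₁ * q - a₁ * p) := by
    linear_combination c₁ * hD₁ - a₁ * hp + b₁ * hq + a₁ * hD₂ - b₁ * hD₃
  have hquot : c₁ * D₁ / D₂₃ = b₁ * q - a₁ * p := by
    rw [hcd, Int.mul_ediv_cancel_left _ hdnz]
  have hδdvd : δ ∣ c₁ * D₁ / D₂₃ := hδ ▸ Int.gcd_dvd_left (c₁ * D₁ / D₂₃) c₁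
  have hdiff : (d₁ - a₁ * x₁ - b₁ * y₁) - (d₁ - a₁ * x₂ - b₁ * y₂)
      = (b₁ * q - a₁ * p) * t := by
    linear_combination (-a₁) * ht1 - b₁ * ht2
  have hmain : δ ∣ ((d₁ - a₁ * x₁ - b₁ * y₁) - (d₁ - a₁ * x₂ - b₁ * y₂)) := by
    rw [hdiff]
    exact Dvd.dvd.mul_right (hquot ▸ hδdvd) t
  refine ⟨hmain, ?_⟩
  constructor
  · intro h; have := dvd_sub h hmain; simpa using this
  · intro h; have := dvd_add hmain h; simpa using this
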